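/- Let F(x,y) = (y, -x + s(y)). If two points (x₁,y₁) and (x₂,y₂) belong to the same open tile T_{k,ℓ} = (k,k+1) × (ℓ,ℓ+1) for some k,ℓ ∈ ℤ, then for every n ∈ ℕ the second coordinate of Fⁿ(x₁,y₁) is ≥ 0 if and only if the second coordinate of Fⁿ(x₂,y₂) is ≥ 0 (all points of a tile have the same itinerary of every length). -/

import Mathlib

noncomputable def s (y : ℝ) : ℝ := if 0 ≤ y then 1 else -1

noncomputable def F (q : ℝ × ℝ) : ℝ × ℝ := (q.2, -q.1 + s q.2)

/-- All points of an open tile `T_{k,ℓ} = (k,k+1) × (ℓ,ℓ+1)` have the same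
itinerary of every length. -/
theorem same_itinerary_on_tiles (k ℓ : ℤ) (x₁ y₁ x₂ y₂ : ℝ)
    (h₁ : (x₁, y₁) ∈ Set.Ioo ((k : ℝ)) ((k : ℝ) + 1) ×ˢ Set.Ioo ((ℓ : ℝ)) ((ℓ : ℝ) + 1))
    (h₂ : (x₂, y₂) ∈ Set.Ioo ((k : ℝ)) ((k : ℝ) + 1) ×ˢ Set.Ioo ((ℓ : ℝ)) ((ℓ : ℝ) + 1)) :
    ∀ n : ℕ, (0 ≤ (F^[n] (x₁, y₁)).2 ↔ 0 ≤ (F^[n] (x₂, y₂)).2) := by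
  have key : ∀ n : ℕ, ∃ a b : ℤ,
      (F^[n] (x₁, y₁)) ∈ Set.Ioo ((a : ℝ)) ((a : ℝ) + 1) ×ˢ Set.Ioo ((b : ℝ)) ((b : ℝ) + 1) ∧
      (F^[n] (x₂, y₂)) ∈ Set.Ioo ((a : ℝ)) ((a : ℝ) + 1) ×ˢ Set.Ioo ((b : ℝ)) ((b : ℝ) + 1) := by
    intro n
    induction n with
    | zero => exact ⟨k, ℓ, h₁, h₂⟩
    | succ n ih =>
      obtain ⟨a, b, ⟨hx1, hy1⟩, ⟨hx2, hy2⟩⟩ := ih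
      set p := F^[n] (x₁, y₁)
      set q := F^[n] (x₂, y₂)
      have hs : ∀ y : ℝ, y ∈ Set.Ioo ((b : ℝ)) ((b : ℝ) + 1) →
          s y = if 0 ≤ b then 1 else -1 := by
        intro y hy
        rcases le_or_gt 0 b with hb | hb
        · rw [s, if_pos, if_pos hb]
          exact le_trans (by exact_mod_cast hb) hy.1.le
        · rw [s, if_neg, if_neg (not_le.mpr hb)]
          have : (b : ℝ) + 1 ≤ 0 := by exact_mod_cast hb
          exact not_le.mpr (lt_of_lt_of_le hy.2 this)
      refine ⟨b, -a - 1 + (if 0 ≤ b then 1 else -1), ?_, ?_⟩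
      · rw [Function.iterate_succ_apply', show F^[n] (x₁, y₁) = p from rfl]
        refine ⟨hy1, ?_, ?_⟩
        · simp only [F, hs p.2 hy1]
          push_cast
          split <;> linarith [hx1.1, hx1.2]
        · simp only [F, hs p.2 hy1]
          push_cast
          split <;> linarith [hx1.1, hx1.2]
      · rw [Function.iterate_succ_apply', show F^[n] (x₂, y₂) = q from rfl]
        refine ⟨hy2, ?_, ?_⟩
        · simp only [F, hs q.2 hy2]
          push_cast
          split <;> linarith [hx2.1, hx2.2]
        · simp only [F, hs q.2 hy2]
          push_cast
          split <;> linarith [hx2.1, hx2.2]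
  intro n
  obtain ⟨a, b, ⟨_, hy1⟩, ⟨_, hy2⟩⟩ := key n
  have hb : ∀ y : ℝ, y ∈ Set.Ioo ((b : ℝ)) ((b : ℝ) + 1) → (0 ≤ y ↔ 0 ≤ b) := by
    intro y hy
    rcases le_or_gt 0 b with h | h
    · have : (0 : ℝ) ≤ b := by exact_mod_cast h
      exact ⟨fun _ => h, fun _ => le_of_lt (lt_of_le_of_lt this hy.1)⟩
    · have : (b : ℝ) + 1 ≤ 0 := by exact_mod_cast h
      exact ⟨fun hy0 => absurd (lt_of_lt_of_le hy.2 this) (not_lt.mpr hy0),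
        fun hb0 => absurd h (not_lt.mpr hb0)⟩
  rw [hb _ hy1, hb _ hy2]
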